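/- For any positive integer d and nonnegative integers k, m, n with 0 ≤ k ≤ n ≤ m ≤ 2n, we have floor(2n/d) + floor(m/d) + floor((m-k)/d) + floor(k/d) ≥ floor((n-k)/d) + floor((k-m+n)/d) + floor((2m-2k)/d) + floor(2k/d) + floor(n/d) + floor((m-n)/d). -/

import Mathlib

set_option maxHeartbeats 1600000 in
theorem stmt_4 (d k n m : ℤ) (hd : 0 < d) (hk0 : 0 ≤ k) (hk : k ≤ n) (hn : n ≤ m)
    (hm : m ≤ 2 * n) :
    (n - k).fdiv d + (k - m + n).fdiv d + (2 * m - 2 * k).fdiv d + (2 * k).fdiv d +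
        n.fdiv d + (m - n).fdiv d ≤
      (2 * n).fdiv d + m.fdiv d + (m - k).fdiv d + k.fdiv d := by
  have key : ∀ u v t : ℤ, u - v = d * t → -2*d < u - v → u - v < 3*d →
      u = v - d ∨ u = v ∨ u = v + d ∨ u = v + 2*d := by
    intro u v t heq h1 h2
    rw [heq] at h1 h2
    have h3 : -2 < t := by nlinarith
    have h4 : t < 3 := by nlinarith
    interval_cases t <;> omega
  have e1 := Int.mul_fdiv_add_fmod (n - k) d
  have e2 := Int.mul_fdiv_add_fmod (k - m + n) d
  have e3 := Int.mul_fdiv_add_fmod (2 * m - 2 * k) d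
  have e4 := Int.mul_fdiv_add_fmod (2 * k) d
  have e5 := Int.mul_fdiv_add_fmod n d
  have e6 := Int.mul_fdiv_add_fmod (m - n) d
  have e7 := Int.mul_fdiv_add_fmod (2 * n) d
  have e8 := Int.mul_fdiv_add_fmod m d
  have e9 := Int.mul_fdiv_add_fmod (m - k) d
  have e10 := Int.mul_fdiv_add_fmod k d
  have b1 := Int.fmod_nonneg_of_pos (n - k) hd
  have c1 := Int.fmod_lt_of_pos (n - k) hd
  have b2 := Int.fmod_nonneg_of_pos (k - m + n) hd
  have c2 := Int.fmod_lt_of_pos (k - m + n) hd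
  have b3 := Int.fmod_nonneg_of_pos (2 * m - 2 * k) hd
  have c3 := Int.fmod_lt_of_pos (2 * m - 2 * k) hd
  have b4 := Int.fmod_nonneg_of_pos (2 * k) hd
  have c4 := Int.fmod_lt_of_pos (2 * k) hd
  have b5 := Int.fmod_nonneg_of_pos n hd
  have c5 := Int.fmod_lt_of_pos n hd
  have b6 := Int.fmod_nonneg_of_pos (m - n) hd
  have c6 := Int.fmod_lt_of_pos (m - n) hd
  have b7 := Int.fmod_nonneg_of_pos (2 * n) hd
  have c7 := Int.fmod_lt_of_pos (2 * n) hd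
  have b8 := Int.fmod_nonneg_of_pos m hd
  have c8 := Int.fmod_lt_of_pos m hd
  have b9 := Int.fmod_nonneg_of_pos (m - k) hd
  have c9 := Int.fmod_lt_of_pos (m - k) hd
  have b10 := Int.fmod_nonneg_of_pos k hd
  have c10 := Int.fmod_lt_of_pos k hd
  have D1 := key ((n - k).fmod d) (n.fmod d - k.fmod d)
    (n.fdiv d - k.fdiv d - (n - k).fdiv d)
    (by linear_combination e1 + e10 - e5) (by linarith) (by linarith)
  have D2 := key ((k - m + n).fmod d) (k.fmod d - m.fmod d + n.fmod d)
    (k.fdiv d - m.fdiv d + n.fdiv d - (k - m + n).fdiv d)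
    (by linear_combination e2 + e8 - e10 - e5) (by linarith) (by linarith)
  have D3 := key ((2 * m - 2 * k).fmod d) (2 * m.fmod d - 2 * k.fmod d)
    (2 * m.fdiv d - 2 * k.fdiv d - (2 * m - 2 * k).fdiv d)
    (by linear_combination e3 + 2 * e10 - 2 * e8) (by linarith) (by linarith)
  have D4 := key ((2 * k).fmod d) (2 * k.fmod d)
    (2 * k.fdiv d - (2 * k).fdiv d)
    (by linear_combination e4 - 2 * e10) (by linarith) (by linarith)
  have D6 := key ((m - n).fmod d) (m.fmod d - n.fmod d)
    (m.fdiv d - n.fdiv d - (m - n).fdiv d)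
    (by linear_combination e6 + e5 - e8) (by linarith) (by linarith)
  have D7 := key ((2 * n).fmod d) (2 * n.fmod d)
    (2 * n.fdiv d - (2 * n).fdiv d)
    (by linear_combination e7 - 2 * e5) (by linarith) (by linarith)
  have D9 := key ((m - k).fmod d) (m.fmod d - k.fmod d)
    (m.fdiv d - k.fdiv d - (m - k).fdiv d)
    (by linear_combination e9 + e10 - e8) (by linarith) (by linarith)
  have rineq : (2 * n).fmod d + m.fmod d + (m - k).fmod d + k.fmod d ≤
      (n - k).fmod d + (k - m + n).fmod d + (2 * m - 2 * k).fmod d + (2 * k).fmod d +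
        n.fmod d + (m - n).fmod d := by omega
  have hsum : d * ((2 * n).fdiv d + m.fdiv d + (m - k).fdiv d + k.fdiv d -
      ((n - k).fdiv d + (k - m + n).fdiv d + (2 * m - 2 * k).fdiv d + (2 * k).fdiv d +
        n.fdiv d + (m - n).fdiv d)) =
      (n - k).fmod d + (k - m + n).fmod d + (2 * m - 2 * k).fmod d + (2 * k).fmod d +
        n.fmod d + (m - n).fmod d -
      ((2 * n).fmod d + m.fmod d + (m - k).fmod d + k.fmod d) := by
    linear_combination e7 + e8 + e9 + e10 - e1 - e2 - e3 - e4 - e5 - e6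
  nlinarith [hsum, rineq, hd]
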